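/- In the free product ℤ_{2m}^{*n} with length ψ(w) = ∑_k min{ℓ_k, 2m−ℓ_k} for a reduced word w = g_{i₁}^{ℓ₁}⋯g_{i_r}^{ℓ_r}, define u_w = δ_w − δ_{w⁻} where w⁻ = g_{i₁}^{ℓ₁}⋯g_{i_r}^{ℓ_r−1}. Then for any nonidentity reduced word w ending in g_{i_r}^{ℓ_r} one has ⟨u_w, u_{w g_{i_r}^m}⟩_ψ = −1; consequently ⟨u_w + u_{w g_{i_r}^m}, u_w + u_{w g_{i_r}^m}⟩_ψ = 0, i.e. u_w = −u_{w g_{i_r}^m} modulo the kernel of the Gromov form. -/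

import Mathlib

open Monoid

noncomputable def psiFP (m n : ℕ)
    (w : CoprodI (fun _ : Fin n => Multiplicative (ZMod (2 * m)))) : ℕ :=
  ((CoprodI.Word.equiv w).toList.map
    (fun l => min (Multiplicative.toAdd l.2).val (2 * m - (Multiplicative.toAdd l.2).val))).sum

noncomputable def gromovFP (m n : ℕ)
    (w₁ w₂ : CoprodI (fun _ : Fin n => Multiplicative (ZMod (2 * m)))) : ℝ :=
  ((psiFP m n w₁ : ℝ) + (psiFP m n w₂ : ℝ) - (psiFP m n (w₁⁻¹ * w₂) : ℝ)) / 2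

noncomputable def gromovFormFP (m n : ℕ)
    (a b : CoprodI (fun _ : Fin n => Multiplicative (ZMod (2 * m))) →₀ ℝ) : ℝ :=
  ∑ g ∈ a.support, ∑ h ∈ b.support, a g * b h * gromovFP m n g h

private lemma psiFP_one (m n : ℕ) : psiFP m n 1 = 0 := by
  have h : CoprodI.Word.equiv
      (1 : CoprodI (fun _ : Fin n => Multiplicative (ZMod (2 * m)))) = CoprodI.Word.empty := by
    simp [CoprodI.Word.equiv]
  simp [psiFP, h, CoprodI.Word.empty]

private lemma psiFP_letter (m n : ℕ) (hm : 0 < m) (i : Fin n) (c : ZMod (2 * m)) :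
    psiFP m n (CoprodI.of (i := i) (Multiplicative.ofAdd c)) = min c.val (2 * m - c.val) := by
  haveI : NeZero (2 * m) := ⟨by omega⟩
  rcases eq_or_ne c 0 with rfl | hc
  · have h1 : (Multiplicative.ofAdd (0 : ZMod (2 * m))) = 1 := rfl
    rw [h1, map_one, psiFP_one]
    simp
  · have hx : (Multiplicative.ofAdd c) ≠ (1 : Multiplicative (ZMod (2 * m))) := by
      simpa using hc
    have h : (CoprodI.Word.equiv (CoprodI.of (i := i) (Multiplicative.ofAdd c))).toList
        = [(⟨i, Multiplicative.ofAdd c⟩ : Σ j : Fin n, Multiplicative (ZMod (2 * m)))] := by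
      show ((CoprodI.of (i := i) (Multiplicative.ofAdd c) :
          CoprodI (fun _ : Fin n => Multiplicative (ZMod (2 * m)))) • CoprodI.Word.empty).toList = _
      rw [CoprodI.Word.of_smul_def]
      rw [CoprodI.Word.equivPair_eq_of_fstIdx_ne (w := CoprodI.Word.empty)
        (by simp [CoprodI.Word.fstIdx, CoprodI.Word.empty])]
      simp [CoprodI.Word.equivPair_eq_of_fstIdx_ne, CoprodI.Word.fstIdx,
        CoprodI.Word.rcons, hx, CoprodI.Word.cons, CoprodI.Word.empty]
    simp [psiFP, h]

private lemma psiFP_letter' (m n : ℕ) (hm : 0 < m) (i : Fin n) (c : ZMod (2 * m)) (k : ℕ)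
    (hck : c = (k : ZMod (2 * m))) (hk : k ≤ 2 * m) :
    psiFP m n (CoprodI.of (i := i) (Multiplicative.ofAdd c)) = min k (2 * m - k) := by
  haveI : NeZero (2 * m) := ⟨by omega⟩
  rw [psiFP_letter m n hm i c, hck, ZMod.val_natCast]
  rcases eq_or_lt_of_le hk with rfl | h
  · simp [Nat.mod_self]
  · rw [Nat.mod_eq_of_lt h]

private lemma gform_repr (m n : ℕ)
    (a b : CoprodI (fun _ : Fin n => Multiplicative (ZMod (2 * m))) →₀ ℝ) :
    gromovFormFP m n a b
      = a.sum (fun g x => b.sum (fun h y => x * y * gromovFP m n g h)) := rfl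

private lemma gform_add_left (m n : ℕ)
    (a a' b : CoprodI (fun _ : Fin n => Multiplicative (ZMod (2 * m))) →₀ ℝ) :
    gromovFormFP m n (a + a') b = gromovFormFP m n a b + gromovFormFP m n a' b := by
  classical
  simp only [gform_repr]
  refine Finsupp.sum_add_index' ?_ ?_
  · intro g; simp [Finsupp.sum]
  · intro g x₁ x₂; simp [Finsupp.sum, add_mul, Finset.sum_add_distrib]

private lemma gform_add_right (m n : ℕ)
    (a b b' : CoprodI (fun _ : Fin n => Multiplicative (ZMod (2 * m))) →₀ ℝ) :
    gromovFormFP m n a (b + b') = gromovFormFP m n a b + gromovFormFP m n a b' := by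
  classical
  simp only [gform_repr]
  have h : ∀ g x, (b + b').sum (fun h y => x * y * gromovFP m n g h)
      = b.sum (fun h y => x * y * gromovFP m n g h)
        + b'.sum (fun h y => x * y * gromovFP m n g h) := by
    intro g x
    refine Finsupp.sum_add_index' ?_ ?_
    · intro h; simp
    · intro h y₁ y₂; ring
  calc a.sum (fun g x => (b + b').sum fun h y => x * y * gromovFP m n g h)
      = a.sum (fun g x => (b.sum fun h y => x * y * gromovFP m n g h)
          + (b'.sum fun h y => x * y * gromovFP m n g h)) := by
        simp only [h]
    _ = _ := Finsupp.sum_add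

private lemma gform_single (m n : ℕ)
    (g h : CoprodI (fun _ : Fin n => Multiplicative (ZMod (2 * m)))) (c d : ℝ) :
    gromovFormFP m n (Finsupp.single g c) (Finsupp.single h d) = c * d * gromovFP m n g h := by
  classical
  rcases eq_or_ne c 0 with rfl | hc
  · simp [gromovFormFP]
  rcases eq_or_ne d 0 with rfl | hd
  · simp [gromovFormFP]
  rw [gromovFormFP, Finsupp.support_single_ne_zero _ hc, Finsupp.support_single_ne_zero _ hd]
  simp

noncomputable def uFP (m n : ℕ) (i : Fin n)
    (w : CoprodI (fun _ : Fin n => Multiplicative (ZMod (2 * m)))) :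
    CoprodI (fun _ : Fin n => Multiplicative (ZMod (2 * m))) →₀ ℝ :=
  Finsupp.single w 1
    - Finsupp.single
        (w * CoprodI.of (i := i) (Multiplicative.ofAdd (-1 : ZMod (2 * m)))) 1

private lemma uFP_eq (m n : ℕ) (i : Fin n)
    (w : CoprodI (fun _ : Fin n => Multiplicative (ZMod (2 * m)))) :
    uFP m n i w = Finsupp.single w 1
      + Finsupp.single
          (w * CoprodI.of (i := i) (Multiplicative.ofAdd (-1 : ZMod (2 * m)))) (-1) := by
  rw [uFP, sub_eq_add_neg, ← Finsupp.single_neg]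

/-- in ℤ_{2m}^{*n}, for a nonidentity reduced word w ending with a
letter of index i, one has ⟨u_w, u_{w·g_i^m}⟩_ψ = −1, and consequently
u_w + u_{w·g_i^m} has zero Gromov norm, i.e. u_w = −u_{w·g_i^m} mod the kernel. -/
theorem uFP_last_letter_relation (m n : ℕ) (hm : 0 < m) (i : Fin n)
    (w : CoprodI (fun _ : Fin n => Multiplicative (ZMod (2 * m))))
    (hw : w ≠ 1)
    (hlast : ((CoprodI.Word.equiv w).toList.getLast?).map Sigma.fst = some i) :
    gromovFormFP m n (uFP m n i w)
        (uFP m n i (w * CoprodI.of (i := i) (Multiplicative.ofAdd ((m : ZMod (2 * m))))))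
      = -1 ∧
    gromovFormFP m n
        (uFP m n i w
          + uFP m n i (w * CoprodI.of (i := i) (Multiplicative.ofAdd ((m : ZMod (2 * m))))))
        (uFP m n i w
          + uFP m n i (w * CoprodI.of (i := i) (Multiplicative.ofAdd ((m : ZMod (2 * m))))))
      = 0 := by
  classical
  haveI : NeZero (2 * m) := ⟨by omega⟩
  set of' : ZMod (2 * m) → CoprodI (fun _ : Fin n => Multiplicative (ZMod (2 * m))) :=
    fun c => CoprodI.of (i := i) (Multiplicative.ofAdd c) with hof'
  -- merge double letters
  have hmerge : ∀ a b : ZMod (2 * m),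
      ∀ v : CoprodI (fun _ : Fin n => Multiplicative (ZMod (2 * m))),
      v * of' a * of' b = v * of' (a + b) := by
    intro a b v
    simp only [hof']
    rw [mul_assoc, ← map_mul, ← ofAdd_add]
  -- cancellation lemmas
  have hprod : ∀ a b : ZMod (2 * m), (of' a)⁻¹ * of' b = of' (b - a) := by
    intro a b
    simp only [hof']
    rw [← map_inv, ← map_mul, ← ofAdd_neg, ← ofAdd_add]
    congr 1
    ring
  have key : ∀ a b : ZMod (2 * m), (w * of' a)⁻¹ * (w * of' b) = of' (b - a) := by
    intro a b
    rw [mul_inv_rev, mul_assoc, inv_mul_cancel_left, hprod]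
  have keyl : ∀ b : ZMod (2 * m), w⁻¹ * (w * of' b) = of' b := fun b => inv_mul_cancel_left w _
  have keyr : ∀ a : ZMod (2 * m), (w * of' a)⁻¹ * w = of' (-a) := by
    intro a
    rw [mul_inv_rev, mul_assoc, inv_mul_cancel, mul_one, hof']
    rw [← map_inv, ← ofAdd_neg]
  have keyd : w⁻¹ * w = 1 := inv_mul_cancel w
  -- value of psi on letters: cast facts
  have hz : ((m : ZMod (2 * m))) + ((m : ZMod (2 * m))) = 0 := by
    rw [← Nat.cast_add, show m + m = 2 * m from by ring, ZMod.natCast_self]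
  have psiv : ∀ (c : ZMod (2 * m)) (k : ℕ), c = (k : ZMod (2 * m)) → k ≤ 2 * m →
      psiFP m n (of' c) = min k (2 * m - k) := by
    intro c k h1 h2
    exact psiFP_letter' m n hm i c k h1 h2
  have p1 : psiFP m n (1 : CoprodI (fun _ : Fin n => Multiplicative (ZMod (2 * m)))) = 0 :=
    psiFP_one m n
  have h1m : (1:ℕ) ≤ m := hm
  have h12m : (1:ℕ) ≤ 2 * m := by omega
  have e01 : psiFP m n (of' (-1)) = 1 := by
    rw [psiv _ (2 * m - 1) (by push_cast [Nat.cast_sub h12m]; linear_combination -hz) (by omega)]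
    omega
  have e02 : psiFP m n (of' ((m : ZMod (2 * m)))) = m := by
    rw [psiv _ m (by push_cast; linear_combination) (by omega)]; omega
  have e03 : psiFP m n (of' ((m : ZMod (2 * m)) + -1)) = m - 1 := by
    rw [psiv _ (m - 1) (by push_cast [Nat.cast_sub h1m]; linear_combination) (by omega)]; omega
  have e04 : psiFP m n (of' (-(-1))) = 1 := by
    rw [psiv _ 1 (by push_cast; linear_combination) (by omega)]; omega
  have e05 : psiFP m n (of' (-(m : ZMod (2 * m)))) = m := by
    rw [psiv _ m (by push_cast; linear_combination -hz) (by omega)]; omega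
  have e06 : psiFP m n (of' (-((m : ZMod (2 * m)) + -1))) = m - 1 := by
    rw [psiv _ (m + 1) (by push_cast; linear_combination -hz) (by omega)]; omega
  have e07 : psiFP m n (of' (-1 - -1)) = 0 := by
    rw [psiv _ 0 (by push_cast; linear_combination) (by omega)]; omega
  have e08 : psiFP m n (of' ((m : ZMod (2 * m)) - -1)) = m - 1 := by
    rw [psiv _ (m + 1) (by push_cast; linear_combination) (by omega)]; omega
  have e09 : psiFP m n (of' ((m : ZMod (2 * m)) + -1 - -1)) = m := by
    rw [psiv _ m (by push_cast; linear_combination) (by omega)]; omega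
  have e10 : psiFP m n (of' (-1 - (m : ZMod (2 * m)))) = m - 1 := by
    rw [psiv _ (m - 1) (by push_cast [Nat.cast_sub h1m]; linear_combination -hz) (by omega)]
    omega
  have e11 : psiFP m n (of' ((m : ZMod (2 * m)) - (m : ZMod (2 * m)))) = 0 := by
    rw [psiv _ 0 (by push_cast; linear_combination) (by omega)]; omega
  have e12 : psiFP m n (of' ((m : ZMod (2 * m)) + -1 - (m : ZMod (2 * m)))) = 1 := by
    rw [psiv _ (2 * m - 1) (by push_cast [Nat.cast_sub h12m]; linear_combination -hz) (by omega)]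
    omega
  have e13 : psiFP m n (of' (-1 - ((m : ZMod (2 * m)) + -1))) = m := by
    rw [psiv _ m (by push_cast; linear_combination -hz) (by omega)]; omega
  have e14 : psiFP m n (of' ((m : ZMod (2 * m)) - ((m : ZMod (2 * m)) + -1))) = 1 := by
    rw [psiv _ 1 (by push_cast; linear_combination) (by omega)]; omega
  have e15 : psiFP m n (of' ((m : ZMod (2 * m)) + -1 - ((m : ZMod (2 * m)) + -1))) = 0 := by
    rw [psiv _ 0 (by push_cast; linear_combination) (by omega)]; omega
  have hof'' : ∀ c : ZMod (2 * m),
      (CoprodI.of (i := i) (Multiplicative.ofAdd c)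
        : CoprodI (fun _ : Fin n => Multiplicative (ZMod (2 * m)))) = of' c := fun _ => rfl
  refine ⟨?_, ?_⟩
  · simp only [uFP_eq, hof'', hmerge]
    simp only [gform_add_left, gform_add_right, gform_single, gromovFP]
    simp only [key, keyl, keyr, keyd]
    simp only [e01, e02, e03, e04, e05, e06, e07, e08, e09, e10, e11, e12, e13, e14, e15, p1]
    push_cast [Nat.cast_sub h1m]
    ring
  · simp only [uFP_eq, hof'', hmerge]
    simp only [gform_add_left, gform_add_right, gform_single, gromovFP]
    simp only [key, keyl, keyr, keyd]
    simp only [e01, e02, e03, e04, e05, e06, e07, e08, e09, e10, e11, e12, e13, e14, e15, p1]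
    push_cast [Nat.cast_sub h1m]
    ring
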